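/- Suppose δ > 0 and 3 ≤ L < (64δ)^{−1/2}. Then χ(Γ) < ∞ almost surely. -/

import Mathlib

open scoped Classical

noncomputable section

/-- `α(C)`: the smallest element of a cluster. -/
def clAlpha (c : Finset ℕ) : ℕ := sInf (↑c : Set ℕ)

/-- `ω(C)`: the largest element of a cluster. -/
def clOmega (c : Finset ℕ) : ℕ := sSup (↑c : Set ℕ)

/-- Euclidean distance between two finite subsets of `ℤ₊`. -/
def clDist (a b : Finset ℕ) : ℕ :=
  sInf {d : ℕ | ∃ x ∈ a, ∃ y ∈ b, d = max x y - min x y}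

/-- A maximal `(k+1)`-run among a family `F` of clusters: at least two consecutive members
of `F`, successive ones at Euclidean distance `< L^(k+1)`, maximal in the sense that the
member of `F` immediately preceding (resp. following) the run, if any, is at distance
`≥ L^(k+1)`. -/
structure MaxRun (L k : ℕ) (F : Set (Finset ℕ)) where
  n : ℕ
  c : ℕ → Finset ℕ
  two_le : 2 ≤ n
  mem : ∀ i, i < n → c i ∈ F
  ordered : ∀ i, i + 1 < n → clOmega (c i) < clAlpha (c (i + 1))
  consecutive : ∀ i, i + 1 < n → ∀ b ∈ F,
    ¬(clOmega (c i) < clAlpha b ∧ clOmega b < clAlpha (c (i + 1)))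
  close : ∀ i, i + 1 < n → clDist (c i) (c (i + 1)) < L ^ (k + 1)
  max_below : ∀ b ∈ F, clOmega b < clAlpha (c 0) →
    (∀ b' ∈ F, ¬(clOmega b < clAlpha b' ∧ clOmega b' < clAlpha (c 0))) →
    L ^ (k + 1) ≤ clDist b (c 0)
  max_above : ∀ b ∈ F, clOmega (c (n - 1)) < clAlpha b →
    (∀ b' ∈ F, ¬(clOmega (c (n - 1)) < clAlpha b' ∧ clOmega b' < clAlpha b)) →
    L ^ (k + 1) ≤ clDist (c (n - 1)) b

/-- The span of a run: the smallest integer interval containing all of its constituents. -/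
def MaxRun.spanIcc {L k : ℕ} {F : Set (Finset ℕ)} (R : MaxRun L k F) : Finset ℕ :=
  Finset.Icc (clAlpha (R.c 0)) (clOmega (R.c (R.n - 1)))

/-- The cluster of level `k+1` produced by a maximal `(k+1)`-run: `span(run) ∩ Γ`. -/
def MaxRun.cluster {L k : ℕ} {F : Set (Finset ℕ)} (Γ : Set ℕ) (R : MaxRun L k F) : Finset ℕ :=
  R.spanIcc.filter (fun x => x ∈ Γ)

/-- The mass of the cluster produced by a run with constituent masses `m₁, …, m_n`:
`m₁ + ∑_{s=2}^n (m_s − k)`. -/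
def MaxRun.newMass {L k : ℕ} {F : Set (Finset ℕ)} (mass : Finset ℕ → ℕ) (R : MaxRun L k F) : ℕ :=
  mass (R.c 0) + ∑ i ∈ Finset.Ico 1 R.n, (mass (R.c i) - k)

/-- The recursive cluster hierarchy over the environment `Γ ⊆ ℤ₊` with parameter `L`:
`C 0` is the partition of `Γ` into singletons of mass one; `C (k+1)` consists of the
clusters produced by the maximal `(k+1)`-runs of clusters of `C k` of mass at least `k+1`,
together with the clusters of `C k` disjoint from the spans of all such runs. -/
structure ClusterHierarchy (L : ℕ) (Γ : Set ℕ) where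
  C : ℕ → Set (Finset ℕ)
  mass : Finset ℕ → ℕ
  C_zero : C 0 = {s | ∃ x ∈ Γ, s = {x}}
  mass_zero : ∀ x ∈ Γ, mass ({x} : Finset ℕ) = 1
  mem_succ : ∀ k c, c ∈ C (k + 1) ↔
    ((∃ R : MaxRun L k {b | b ∈ C k ∧ k + 1 ≤ mass b}, c = R.cluster Γ) ∨
     (c ∈ C k ∧ ∀ R : MaxRun L k {b | b ∈ C k ∧ k + 1 ≤ mass b},
        ∀ x ∈ c, x ∉ R.spanIcc))
  mass_succ : ∀ k (R : MaxRun L k {b | b ∈ C k ∧ k + 1 ≤ mass b}),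
    mass (R.cluster Γ) = R.newMass mass

namespace ClusterHierarchy

variable {L : ℕ} {Γ : Set ℕ}

/-- `c` is a cluster of the hierarchy. -/
def IsCluster (H : ClusterHierarchy L Γ) (c : Finset ℕ) : Prop := ∃ k, c ∈ H.C k

/-- The level `ℓ(C)` of a cluster: the smallest `k` with `C ∈ C_k`. -/
def level (H : ClusterHierarchy L Γ) (c : Finset ℕ) : ℕ := sInf {k | c ∈ H.C k}

/-- The set of levels of clusters containing `x`; `κ(x)` is its supremum. -/
def kappaSet (H : ClusterHierarchy L Γ) (x : ℕ) : Set ℕ :=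
  {ℓ | ∃ c, H.IsCluster c ∧ H.level c = ℓ ∧ x ∈ c}

/-- The limiting partition `C_∞`: the maximal clusters, i.e. clusters which are not met
by any cluster of strictly larger level. -/
def Cinf (H : ClusterHierarchy L Γ) : Set (Finset ℕ) :=
  {c | H.IsCluster c ∧
    ∀ c', H.IsCluster c' → (∃ x, x ∈ c ∧ x ∈ c') → H.level c' ≤ H.level c}

end ClusterHierarchy

end

namespace ChiAux

open Finset

/-! ### Basic lemmas about `clAlpha`, `clOmega`, `clDist` -/

lemma clAlpha_eq {c : Finset ℕ} {a : ℕ} (ha : a ∈ c) (h : ∀ x ∈ c, a ≤ x) :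
    clAlpha c = a :=
  IsLeast.csInf_eq ⟨ha, fun x hx => h x hx⟩

lemma clOmega_eq {c : Finset ℕ} {b : ℕ} (hb : b ∈ c) (h : ∀ x ∈ c, x ≤ b) :
    clOmega c = b :=
  IsGreatest.csSup_eq ⟨hb, fun x hx => h x hx⟩

lemma clAlpha_min' {c : Finset ℕ} (h : c.Nonempty) : clAlpha c = c.min' h :=
  clAlpha_eq (c.min'_mem h) (fun x hx => c.min'_le x hx)

lemma clOmega_max' {c : Finset ℕ} (h : c.Nonempty) : clOmega c = c.max' h :=
  clOmega_eq (c.max'_mem h) (fun x hx => c.le_max' x hx)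

lemma clAlpha_mem {c : Finset ℕ} (h : c.Nonempty) : clAlpha c ∈ c := by
  rw [clAlpha_min' h]; exact c.min'_mem h

lemma clOmega_mem {c : Finset ℕ} (h : c.Nonempty) : clOmega c ∈ c := by
  rw [clOmega_max' h]; exact c.max'_mem h

lemma clAlpha_le {c : Finset ℕ} {x : ℕ} (h : c.Nonempty) (hx : x ∈ c) : clAlpha c ≤ x := by
  rw [clAlpha_min' h]; exact c.min'_le x hx

lemma le_clOmega {c : Finset ℕ} {x : ℕ} (h : c.Nonempty) (hx : x ∈ c) : x ≤ clOmega c := by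
  rw [clOmega_max' h]; exact c.le_max' x hx

lemma clAlpha_le_clOmega {c : Finset ℕ} (h : c.Nonempty) : clAlpha c ≤ clOmega c :=
  (clAlpha_le h (clOmega_mem h))

lemma clDist_singleton_zero {c : Finset ℕ} (h : c.Nonempty) : clDist c {0} = clAlpha c := by
  have hset : {d : ℕ | ∃ x ∈ c, ∃ y ∈ ({0} : Finset ℕ), d = max x y - min x y}
      = (↑c : Set ℕ) := by
    ext d
    constructor
    · rintro ⟨x, hx, y, hy, rfl⟩
      have hy0 : y = 0 := Finset.mem_singleton.1 hy
      subst hy0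
      simpa using hx
    · intro hd
      exact ⟨d, hd, 0, Finset.mem_singleton_self 0, by omega⟩
  rw [clDist, hset, clAlpha]

lemma gap_le_clDist {a b : Finset ℕ} (ha : a.Nonempty) (hb : b.Nonempty)
    (h : clOmega a < clAlpha b) : clAlpha b - clOmega a ≤ clDist a b := by
  have hne : {d : ℕ | ∃ x ∈ a, ∃ y ∈ b, d = max x y - min x y}.Nonempty :=
    ⟨_, clOmega a, clOmega_mem ha, clAlpha b, clAlpha_mem hb, rfl⟩
  obtain ⟨x, hx, y, hy, hd⟩ := Nat.sInf_mem hne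
  have h1 : x ≤ clOmega a := le_clOmega ha hx
  have h2 : clAlpha b ≤ y := clAlpha_le hb hy
  have hxy : x ≤ y := by omega
  rw [clDist, hd, max_eq_right hxy, min_eq_left hxy]
  omega

/-! ### Skeletons -/

/-- The points of a chain starting at `a` with successive gaps given by first components. -/
def skPts : ℕ → List (ℕ × ℕ) → List ℕ
  | a, [] => [a]
  | a, e :: t => a :: skPts (a + e.1) t

/-- The endpoint of a chain. -/
def skEnd (a : ℕ) (l : List (ℕ × ℕ)) : ℕ := a + (l.map Prod.fst).sum

/-- The total of the levels assigned to gaps. -/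
def levSum (l : List (ℕ × ℕ)) : ℕ := (l.map Prod.snd).sum

/-- A valid entry: a positive gap of size at most `L ^ level` with level at least 1. -/
def okE (L : ℕ) (e : ℕ × ℕ) : Prop := 1 ≤ e.1 ∧ 1 ≤ e.2 ∧ e.1 ≤ L ^ e.2

@[simp] lemma skEnd_nil (a : ℕ) : skEnd a [] = a := by simp [skEnd]

lemma skEnd_cons (a : ℕ) (e : ℕ × ℕ) (t : List (ℕ × ℕ)) :
    skEnd a (e :: t) = skEnd (a + e.1) t := by
  simp [skEnd]; omega

lemma skPts_append (l₁ : List (ℕ × ℕ)) (e : ℕ × ℕ) (l₂ : List (ℕ × ℕ)) (a : ℕ) :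
    skPts a (l₁ ++ e :: l₂) = skPts a l₁ ++ skPts (skEnd a l₁ + e.1) l₂ := by
  induction l₁ generalizing a with
  | nil => simp [skPts]
  | cons f t ihc => simp [skPts, ihc, skEnd_cons]

lemma skEnd_append (l₁ : List (ℕ × ℕ)) (e : ℕ × ℕ) (l₂ : List (ℕ × ℕ)) (a : ℕ) :
    skEnd a (l₁ ++ e :: l₂) = skEnd (skEnd a l₁ + e.1) l₂ := by
  simp [skEnd]; omega

lemma levSum_append (l₁ : List (ℕ × ℕ)) (e : ℕ × ℕ) (l₂ : List (ℕ × ℕ)) :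
    levSum (l₁ ++ e :: l₂) = levSum l₁ + e.2 + levSum l₂ := by
  simp [levSum]; omega

/-- `IsSkel L Γ a b m`: there is a hierarchical chain of points of `Γ` from `a` to `b`
witnessing a cluster of mass `m`. -/
def IsSkel (L : ℕ) (Γ : Set ℕ) (a b m : ℕ) : Prop :=
  ∃ l : List (ℕ × ℕ), (∀ x ∈ skPts a l, x ∈ Γ) ∧ (∀ e ∈ l, okE L e) ∧
    skEnd a l = b ∧ m ≤ l.length + 1 ∧ levSum l + m + 1 ≤ 2 * (l.length + 1)

lemma IsSkel.single {L : ℕ} {Γ : Set ℕ} {a : ℕ} (ha : a ∈ Γ) : IsSkel L Γ a a 1 := by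
  refine ⟨[], ?_, by simp, by simp, by simp, by simp [levSum]⟩
  intro x hx
  simp only [skPts, List.mem_singleton] at hx
  subst hx; exact ha

lemma IsSkel.join {L : ℕ} {Γ : Set ℕ} {a b a' b' m m' mN j : ℕ}
    (h₁ : IsSkel L Γ a b m) (h₂ : IsSkel L Γ a' b' m') (hlt : b < a')
    (hgap : a' - b ≤ L ^ j) (hj : 1 ≤ j) (hm1 : mN + j ≤ m + m' + 1)
    (hm2 : mN ≤ m + m') : IsSkel L Γ a b' mN := by
  obtain ⟨l₁, hpts₁, hok₁, hend₁, hlen₁, hlev₁⟩ := h₁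
  obtain ⟨l₂, hpts₂, hok₂, hend₂, hlen₂, hlev₂⟩ := h₂
  refine ⟨l₁ ++ (a' - b, j) :: l₂, ?_, ?_, ?_, ?_, ?_⟩
  · intro x hx
    rw [skPts_append] at hx
    rcases List.mem_append.1 hx with hx | hx
    · exact hpts₁ x hx
    · have : skEnd a l₁ + (a' - b, j).1 = a' := by rw [hend₁]; simp; omega
      rw [this] at hx
      exact hpts₂ x hx
  · intro e he
    rcases List.mem_append.1 he with he | he
    · exact hok₁ e he
    · rcases List.mem_cons.1 he with rfl | he
      · exact ⟨by omega, hj, hgap⟩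
      · exact hok₂ e he
  · rw [skEnd_append, hend₁]
    have : b + (a' - b, j).1 = a' := by simp; omega
    rw [this, hend₂]
  · simp only [List.length_append, List.length_cons]
    omega
  · rw [levSum_append]
    simp only [List.length_append, List.length_cons]
    omega

/-! ### Every cluster carries a skeleton -/

theorem cluster_good {L : ℕ} {Γ : Set ℕ} (H : ClusterHierarchy L Γ) :
    ∀ k, ∀ c ∈ H.C k, c.Nonempty ∧ (↑c : Set ℕ) ⊆ Γ ∧
      IsSkel L Γ (clAlpha c) (clOmega c) (H.mass c) := by
  intro k
  induction k with
  | zero =>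
    rw [H.C_zero]
    rintro c ⟨x, hxΓ, rfl⟩
    have hA : clAlpha {x} = x := clAlpha_eq (Finset.mem_singleton_self x)
      (fun y hy => le_of_eq (Finset.mem_singleton.1 hy).symm)
    have hO : clOmega {x} = x := clOmega_eq (Finset.mem_singleton_self x)
      (fun y hy => le_of_eq (Finset.mem_singleton.1 hy))
    refine ⟨⟨x, Finset.mem_singleton_self x⟩, ?_, ?_⟩
    · intro y hy
      have : y = x := Finset.mem_singleton.1 hy
      subst this; exact hxΓ
    · rw [hA, hO, H.mass_zero x hxΓ]
      exact IsSkel.single hxΓ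
  | succ k ih =>
    intro c hc
    rcases (H.mem_succ k c).1 hc with ⟨R, rfl⟩ | ⟨hck, _⟩
    · -- run case
      have hblock : ∀ i, i < R.n → (R.c i).Nonempty ∧ (↑(R.c i) : Set ℕ) ⊆ Γ ∧
          IsSkel L Γ (clAlpha (R.c i)) (clOmega (R.c i)) (H.mass (R.c i)) ∧
          k + 1 ≤ H.mass (R.c i) := by
        intro i hi
        have hmem := R.mem i hi
        obtain ⟨hCk, hmass⟩ := hmem
        obtain ⟨h1, h2, h3⟩ := ih (R.c i) hCk
        exact ⟨h1, h2, h3, hmass⟩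
      have hn0 : 0 < R.n := by have := R.two_le; omega
      have hmono : ∀ j, j < R.n → clAlpha (R.c 0) ≤ clOmega (R.c j) := by
        intro j
        induction j with
        | zero => intro h0; exact clAlpha_le_clOmega (hblock 0 h0).1
        | succ j ihm =>
          intro hj1
          have hj : j < R.n := by omega
          have h1 := ihm hj
          have h2 := R.ordered j hj1
          have h3 := clAlpha_le_clOmega (hblock (j+1) hj1).1
          omega
      have hlast : R.n - 1 < R.n := by omega
      -- endpoints of the produced cluster
      set a0 := clAlpha (R.c 0) with ha0
      set w := clOmega (R.c (R.n - 1)) with hw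
      have ha0w : a0 ≤ w := hmono (R.n - 1) hlast
      have ha0Γ : a0 ∈ Γ := (hblock 0 hn0).2.1 (clAlpha_mem (hblock 0 hn0).1)
      have hwΓ : w ∈ Γ := (hblock (R.n - 1) hlast).2.1 (clOmega_mem (hblock (R.n - 1) hlast).1)
      have ha0mem : a0 ∈ R.cluster Γ := by
        rw [MaxRun.cluster, Finset.mem_filter, MaxRun.spanIcc, Finset.mem_Icc]
        exact ⟨⟨le_refl a0, ha0w⟩, ha0Γ⟩
      have hwmem : w ∈ R.cluster Γ := by
        rw [MaxRun.cluster, Finset.mem_filter, MaxRun.spanIcc, Finset.mem_Icc]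
        exact ⟨⟨ha0w, le_refl w⟩, hwΓ⟩
      have hbound : ∀ x ∈ R.cluster Γ, a0 ≤ x ∧ x ≤ w ∧ x ∈ Γ := by
        intro x hx
        rw [MaxRun.cluster, Finset.mem_filter, MaxRun.spanIcc, Finset.mem_Icc] at hx
        exact ⟨hx.1.1, hx.1.2, hx.2⟩
      have hAc : clAlpha (R.cluster Γ) = a0 :=
        clAlpha_eq ha0mem (fun x hx => (hbound x hx).1)
      have hOc : clOmega (R.cluster Γ) = w :=
        clOmega_eq hwmem (fun x hx => (hbound x hx).2.1)
      -- the skeleton of the run, by induction on the prefix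
      have key : ∀ j, j < R.n → IsSkel L Γ a0 (clOmega (R.c j))
          (H.mass (R.c 0) + ∑ i ∈ Finset.Ico 1 (j+1), (H.mass (R.c i) - k)) := by
        intro j
        induction j with
        | zero =>
          intro h0
          simpa using (hblock 0 h0).2.2.1
        | succ j ihk =>
          intro hj1
          have hj : j < R.n := by omega
          have hprev := ihk hj
          have hblk := (hblock (j+1) hj1).2.2.1
          have hmassb := (hblock (j+1) hj1).2.2.2
          have hord := R.ordered j hj1
          have hclose := R.close j hj1
          have hgap : clAlpha (R.c (j+1)) - clOmega (R.c j) ≤ L ^ (k+1) := by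
            have := gap_le_clDist (hblock j hj).1 (hblock (j+1) hj1).1 hord
            omega
          have hsum : ∑ i ∈ Finset.Ico 1 (j+1+1), (H.mass (R.c i) - k)
              = ∑ i ∈ Finset.Ico 1 (j+1), (H.mass (R.c i) - k) + (H.mass (R.c (j+1)) - k) :=
            Finset.sum_Ico_succ_top (by omega) _
          rw [hsum]
          exact hprev.join hblk hord hgap (by omega) (by omega) (by omega)
      have hskel := key (R.n - 1) hlast
      have hmassc : H.mass (R.cluster Γ) = R.newMass H.mass := H.mass_succ k R
      have hne : R.n - 1 + 1 = R.n := by omega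
      rw [hne] at hskel
      refine ⟨⟨a0, ha0mem⟩, fun x hx => (hbound x hx).2.2, ?_⟩
      rw [hAc, hOc, hmassc, MaxRun.newMass]
      exact hskel
    · exact ih c hck

end ChiAux

namespace ChiAux

open scoped ENNReal

/-! ### Chains as events -/

lemma skPts_length (a : ℕ) (l : List (ℕ × ℕ)) : (skPts a l).length = l.length + 1 := by
  induction l generalizing a with
  | nil => simp [skPts]
  | cons e t ih => simp [skPts, ih]

lemma skPts_ge (a : ℕ) (l : List (ℕ × ℕ)) : ∀ x ∈ skPts a l, a ≤ x := by
  induction l generalizing a with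
  | nil => intro x hx; simp [skPts] at hx; omega
  | cons e t ih =>
    intro x hx
    rcases List.mem_cons.1 hx with rfl | hx
    · exact le_refl x
    · have := ih (a + e.1) x hx; omega

lemma skPts_nodup (a : ℕ) (l : List (ℕ × ℕ)) (h : ∀ e ∈ l, 1 ≤ e.1) :
    (skPts a l).Nodup := by
  have hpw : (skPts a l).Pairwise (· < ·) := by
    induction l generalizing a with
    | nil => simp [skPts]
    | cons e t ih =>
      refine List.pairwise_cons.2 ⟨?_, ih (a + e.1) (fun e' he' => h e' (List.mem_cons_of_mem _ he'))⟩
      intro x hx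
      have h1 := skPts_ge (a + e.1) t x hx
      have h2 : 1 ≤ e.1 := h e List.mem_cons_self
      omega
  exact hpw.imp (fun hlt => Nat.ne_of_lt hlt)

/-- The event that all points of the chain `(a, l)` lie in `Γ(ω)`. -/
def evt {Ω : Type} (ξ : ℕ → Ω → Bool) (a : ℕ) (l : List (ℕ × ℕ)) : Set Ω :=
  {ω | ∀ x ∈ skPts a l, ξ x ω = true}

/-- A valid index for the bad event of mass `m`. -/
def validIdx (L m : ℕ) (j : ℕ × List (ℕ × ℕ)) : Prop :=
  j.1 < L ^ m ∧ (∀ e ∈ j.2, okE L e) ∧ m ≤ j.2.length + 1 ∧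
    levSum j.2 + m + 1 ≤ 2 * (j.2.length + 1)

/-- The bad event of mass `m`. -/
def BadSet {Ω : Type} (L : ℕ) (ξ : ℕ → Ω → Bool) (m : ℕ) : Set Ω :=
  ⋃ j : ℕ × List (ℕ × ℕ), ⋃ (_ : validIdx L m j), evt ξ j.1 j.2

open MeasureTheory ProbabilityTheory in
lemma meas_evt {Ω : Type} [MeasurableSpace Ω] (μ : Measure Ω) (ξ : ℕ → Ω → Bool)
    (hindep : iIndepFun ξ μ) (ε : ℝ≥0∞)
    (hlaw : ∀ i, μ {ω | ξ i ω = true} = ε)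
    (a : ℕ) (l : List (ℕ × ℕ)) (hok : ∀ e ∈ l, 1 ≤ e.1) :
    μ (evt ξ a l) = ε ^ (l.length + 1) := by
  have hnd : (skPts a l).Nodup := skPts_nodup a l hok
  have hset : evt ξ a l = ⋂ x ∈ (skPts a l).toFinset, {ω | ξ x ω = true} := by
    ext ω; simp [evt, List.mem_toFinset]
  rw [hset, hindep.meas_biInter (s := fun x => {ω | ξ x ω = true})
    (fun i _ => ⟨{true}, measurableSet_singleton true, rfl⟩)]
  rw [Finset.prod_congr rfl (fun x _ => hlaw x), Finset.prod_const,
    List.toFinset_card_of_nodup hnd, skPts_length]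

/-! ### Counting weights -/

noncomputable def W (L : ℕ) (ε : ℝ≥0∞) (e : ℕ × ℕ) : ℝ≥0∞ :=
  if okE L e then (4 * (L : ℝ≥0∞) ^ 2 * ε) * ((2 * (L : ℝ≥0∞))⁻¹) ^ e.2 else 0

noncomputable def prodW (L : ℕ) (ε : ℝ≥0∞) (l : List (ℕ × ℕ)) : ℝ≥0∞ :=
  (l.map (W L ε)).prod

@[simp] lemma prodW_nil (L : ℕ) (ε : ℝ≥0∞) : prodW L ε [] = 1 := by simp [prodW]

lemma prodW_cons (L : ℕ) (ε : ℝ≥0∞) (e : ℕ × ℕ) (t : List (ℕ × ℕ)) :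
    prodW L ε (e :: t) = W L ε e * prodW L ε t := by simp [prodW]

lemma prodW_of_ok (L : ℕ) (ε : ℝ≥0∞) (l : List (ℕ × ℕ)) (h : ∀ e ∈ l, okE L e) :
    prodW L ε l = (4 * (L : ℝ≥0∞) ^ 2 * ε) ^ l.length * ((2 * (L : ℝ≥0∞))⁻¹) ^ levSum l := by
  induction l with
  | nil => simp [levSum]
  | cons e t ih =>
    have he : okE L e := h e List.mem_cons_self
    have ht : ∀ e' ∈ t, okE L e' := fun e' he' => h e' (List.mem_cons_of_mem _ he')
    rw [prodW_cons, W, if_pos he, ih ht]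
    have hlev : levSum (e :: t) = e.2 + levSum t := by simp [levSum]
    rw [hlev, List.length_cons, pow_succ, pow_add]
    ring

end ChiAux

namespace ChiAux

open scoped ENNReal

section Sums

variable (L : ℕ) (ε : ℝ≥0∞)

/-- Sum of the per-entry weight. -/
lemma tsum_W (hL3 : 3 ≤ L) : ∑' e : ℕ × ℕ, W L ε e = 4 * (L : ℝ≥0∞) ^ 2 * ε := by
  have hL0 : (L : ℝ≥0∞) ≠ 0 := by
    simp only [ne_eq, Nat.cast_eq_zero]; omega
  have hLtop : (L : ℝ≥0∞) ≠ ⊤ := ENNReal.natCast_ne_top L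
  have hLinv : (L : ℝ≥0∞) * (2 * (L : ℝ≥0∞))⁻¹ = 2⁻¹ := by
    rw [ENNReal.mul_inv (Or.inl two_ne_zero) (Or.inl ENNReal.ofNat_ne_top),
      mul_left_comm, ENNReal.mul_inv_cancel hL0 hLtop, mul_one]
  rw [ENNReal.tsum_prod', ENNReal.tsum_comm]
  have hinner : ∀ ℓ : ℕ, (∑' g : ℕ, W L ε (g, ℓ))
      = (if 1 ≤ ℓ then (4 * (L : ℝ≥0∞) ^ 2 * ε) * (2⁻¹) ^ ℓ else 0) := by
    intro ℓ
    by_cases hℓ : 1 ≤ ℓ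
    · rw [if_pos hℓ]
      have hsupp : ∀ g ∉ Finset.Icc 1 (L ^ ℓ), W L ε (g, ℓ) = 0 := by
        intro g hg
        rw [Finset.mem_Icc] at hg
        rw [W, if_neg]
        rintro ⟨h1, _, h3⟩
        exact hg ⟨h1, h3⟩
      rw [tsum_eq_sum hsupp]
      have hval : ∀ g ∈ Finset.Icc 1 (L ^ ℓ), W L ε (g, ℓ)
          = (4 * (L : ℝ≥0∞) ^ 2 * ε) * ((2 * (L : ℝ≥0∞))⁻¹) ^ ℓ := by
        intro g hg
        rw [Finset.mem_Icc] at hg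
        rw [W, if_pos ⟨hg.1, hℓ, hg.2⟩]
      rw [Finset.sum_congr rfl hval, Finset.sum_const, Nat.card_Icc]
      have hcard : L ^ ℓ + 1 - 1 = L ^ ℓ := by omega
      rw [hcard, nsmul_eq_mul, Nat.cast_pow]
      have : (L : ℝ≥0∞) ^ ℓ * ((4 * (L : ℝ≥0∞) ^ 2 * ε) * ((2 * (L : ℝ≥0∞))⁻¹) ^ ℓ)
          = (4 * (L : ℝ≥0∞) ^ 2 * ε) * (((L : ℝ≥0∞)) * (2 * (L : ℝ≥0∞))⁻¹) ^ ℓ := by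
        rw [mul_pow]; ring
      rw [this, hLinv]
    · rw [if_neg hℓ]
      have : ∀ g : ℕ, W L ε (g, ℓ) = 0 := by
        intro g
        rw [W, if_neg]
        rintro ⟨_, h2, _⟩
        exact hℓ h2
      simp [this]
  rw [tsum_congr hinner]
  have hrw : ∀ ℓ : ℕ, (if 1 ≤ ℓ then (4 * (L : ℝ≥0∞) ^ 2 * ε) * (2⁻¹) ^ ℓ else 0)
      = (4 * (L : ℝ≥0∞) ^ 2 * ε) * (if 1 ≤ ℓ then ((2 : ℝ≥0∞)⁻¹) ^ ℓ else 0) := by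
    intro ℓ; by_cases hℓ : 1 ≤ ℓ <;> simp [hℓ]
  rw [tsum_congr hrw, ENNReal.tsum_mul_left]
  have hgeo : ∑' ℓ : ℕ, (if 1 ≤ ℓ then ((2 : ℝ≥0∞)⁻¹) ^ ℓ else 0) = 1 := by
    have hinj : Function.Injective (fun n : ℕ => n + 1) := fun x y h => by simpa using h
    have hsupp : Function.support (fun ℓ : ℕ => if 1 ≤ ℓ then ((2 : ℝ≥0∞)⁻¹) ^ ℓ else 0)
        ⊆ Set.range (fun n : ℕ => n + 1) := by
      intro ℓ hℓ
      rcases Nat.eq_zero_or_pos ℓ with rfl | hpos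
      · simp at hℓ
      · exact ⟨ℓ - 1, by show ℓ - 1 + 1 = ℓ; omega⟩
    rw [← hinj.tsum_eq hsupp]
    have : ∀ n : ℕ, (if 1 ≤ n + 1 then ((2 : ℝ≥0∞)⁻¹) ^ (n + 1) else 0)
        = ((2 : ℝ≥0∞)⁻¹) ^ n * 2⁻¹ := by
      intro n; rw [if_pos (by omega), pow_succ]
    rw [tsum_congr this, ENNReal.tsum_mul_right, ENNReal.tsum_geometric,
      ENNReal.one_sub_inv_two, inv_inv]
    exact ENNReal.mul_inv_cancel two_ne_zero ENNReal.ofNat_ne_top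
  rw [hgeo, mul_one]

/-- Sum over lists of fixed length. -/
lemma tsum_prodW_len (r : ℕ) :
    ∑' l : List (ℕ × ℕ), (if l.length = r then prodW L ε l else 0)
      = (∑' e : ℕ × ℕ, W L ε e) ^ r := by
  induction r with
  | zero =>
    rw [tsum_eq_single ([] : List (ℕ × ℕ))]
    · simp
    · intro l hl
      rw [if_neg]
      simpa [List.length_eq_zero_iff] using hl
  | succ r ih =>
    have hinj : Function.Injective (fun p : (ℕ × ℕ) × List (ℕ × ℕ) => p.1 :: p.2) := by
      rintro ⟨a, b⟩ ⟨c, d⟩ h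
      simp only [List.cons.injEq] at h
      simp [h.1, h.2]
    have hsupp : Function.support
        (fun l : List (ℕ × ℕ) => if l.length = r + 1 then prodW L ε l else 0)
        ⊆ Set.range (fun p : (ℕ × ℕ) × List (ℕ × ℕ) => p.1 :: p.2) := by
      intro l hl
      rcases l with _ | ⟨e, t⟩
      · simp at hl
      · exact ⟨(e, t), rfl⟩
    rw [← hinj.tsum_eq hsupp]
    have hterm : ∀ p : (ℕ × ℕ) × List (ℕ × ℕ),
        (if (p.1 :: p.2).length = r + 1 then prodW L ε (p.1 :: p.2) else 0)
          = W L ε p.1 * (if p.2.length = r then prodW L ε p.2 else 0) := by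
      rintro ⟨e, t⟩
      by_cases ht : t.length = r
      · rw [if_pos (by simp [ht]), if_pos ht, prodW_cons]
      · rw [if_neg (by simp [ht]), if_neg ht, mul_zero]
    rw [tsum_congr hterm, ENNReal.tsum_prod']
    have : ∀ e : ℕ × ℕ, ∑' t : List (ℕ × ℕ),
        W L ε e * (if t.length = r then prodW L ε t else 0)
          = W L ε e * (∑' e' : ℕ × ℕ, W L ε e') ^ r := by
      intro e; rw [ENNReal.tsum_mul_left, ih]
    rw [tsum_congr this, ENNReal.tsum_mul_right, pow_succ]
    ring

/-- Tail bound for the sum over lists of length at least `R`. -/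
lemma tsum_prodW_ge (R : ℕ) (hs : ∑' e : ℕ × ℕ, W L ε e ≤ 2⁻¹) :
    ∑' l : List (ℕ × ℕ), (if R ≤ l.length then prodW L ε l else 0)
      ≤ (∑' e : ℕ × ℕ, W L ε e) ^ R * 2 := by
  set s := ∑' e : ℕ × ℕ, W L ε e with hs_def
  have hstep : ∀ l : List (ℕ × ℕ), (if R ≤ l.length then prodW L ε l else 0)
      = ∑' r : ℕ, (if R ≤ r ∧ l.length = r then prodW L ε l else 0) := by
    intro l
    rw [tsum_eq_single l.length]
    · by_cases h : R ≤ l.length <;> simp [h]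
    · intro r hr
      rw [if_neg]
      rintro ⟨_, h2⟩
      exact hr h2.symm
  rw [tsum_congr hstep, ENNReal.tsum_comm]
  have hinner : ∀ r : ℕ, (∑' l : List (ℕ × ℕ), (if R ≤ r ∧ l.length = r then prodW L ε l else 0))
      = (if R ≤ r then s ^ r else 0) := by
    intro r
    by_cases h : R ≤ r
    · rw [if_pos h]
      rw [← tsum_prodW_len L ε r]
      exact tsum_congr (fun l => by by_cases hl : l.length = r <;> simp [hl, h])
    · rw [if_neg h]
      have : ∀ l : List (ℕ × ℕ), (if R ≤ r ∧ l.length = r then prodW L ε l else 0) = 0 := by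
        intro l; rw [if_neg]; rintro ⟨h1, _⟩; exact h h1
      simp [this]
  rw [tsum_congr hinner]
  have hinj : Function.Injective (fun i : ℕ => R + i) := fun x y h => by simpa using h
  have hsupp : Function.support (fun r : ℕ => if R ≤ r then s ^ r else 0)
      ⊆ Set.range (fun i : ℕ => R + i) := by
    intro r hr
    by_cases h : R ≤ r
    · exact ⟨r - R, by show R + (r - R) = r; omega⟩
    · simp [h] at hr
  rw [← hinj.tsum_eq hsupp]
  have : ∀ i : ℕ, (if R ≤ R + i then s ^ (R + i) else 0) = s ^ R * s ^ i := by
    intro i; rw [if_pos (by omega), pow_add]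
  rw [tsum_congr this, ENNReal.tsum_mul_left, ENNReal.tsum_geometric]
  refine mul_le_mul_right ?_ _
  have h1 : (2 : ℝ≥0∞)⁻¹ ≤ 1 - s := by
    calc (2 : ℝ≥0∞)⁻¹ = 1 - 2⁻¹ := ENNReal.one_sub_inv_two.symm
    _ ≤ 1 - s := tsub_le_tsub_left hs 1
  calc (1 - s)⁻¹ ≤ ((2 : ℝ≥0∞)⁻¹)⁻¹ := ENNReal.inv_le_inv.2 h1
  _ = 2 := by rw [inv_inv]

end Sums

end ChiAux

namespace ChiAux

open scoped ENNReal
open MeasureTheory ProbabilityTheory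

section Main

variable {Ω : Type} [MeasurableSpace Ω]

lemma key_eq (ε t : ℝ≥0∞) (len M lev : ℕ) :
    ε ^ (len + 1) * (t ^ (2 * len) * (t⁻¹) ^ (M + lev))
      = ε * t⁻¹ ^ M * ((t ^ 2 * ε) ^ len * t⁻¹ ^ lev) := by
  rw [mul_pow, ← pow_mul, pow_add, pow_succ]
  ring

/-- Pointwise domination of the bad-index weight by a product weight. -/
lemma key_le (L : ℕ) (hL3 : 3 ≤ L) (ε : ℝ≥0∞) (M : ℕ) (j : ℕ × List (ℕ × ℕ)) :
    (if validIdx L (M + 1) j then ε ^ (j.2.length + 1) else 0)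
      ≤ (if j.1 < L ^ (M + 1) then (1 : ℝ≥0∞) else 0)
        * ((ε * ((2 * (L : ℝ≥0∞))⁻¹) ^ M)
          * (if M ≤ j.2.length then prodW L ε j.2 else 0)) := by
  obtain ⟨a, l⟩ := j
  by_cases h : validIdx L (M + 1) (a, l)
  · obtain ⟨h1, h2, h3, h4⟩ := h
    dsimp only at h1 h2 h3 h4 ⊢
    rw [if_pos (by exact ⟨h1, h2, h3, h4⟩), if_pos h1, if_pos (by omega : M ≤ l.length),
      one_mul, prodW_of_ok L ε l h2]
    set t := 2 * (L : ℝ≥0∞) with ht_def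
    have ht0 : t ≠ 0 := by
      simp only [ht_def, ne_eq, mul_eq_zero, not_or]
      constructor
      · exact two_ne_zero
      · simp only [Nat.cast_eq_zero]; omega
    have httop : t ≠ ⊤ := ENNReal.mul_ne_top ENNReal.ofNat_ne_top (ENNReal.natCast_ne_top L)
    have ht4 : 4 * (L : ℝ≥0∞) ^ 2 = t ^ 2 := by
      rw [ht_def, mul_pow]
      norm_num
    have hcancel : ∀ n : ℕ, t ^ n * (t⁻¹) ^ n = 1 := by
      intro n
      rw [← mul_pow, ENNReal.mul_inv_cancel ht0 httop, one_pow]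
    have hone_le : (1 : ℝ≥0∞) ≤ t := by
      rw [ht_def]
      calc (1 : ℝ≥0∞) ≤ 2 := one_le_two
      _ = 2 * 1 := (mul_one 2).symm
      _ ≤ 2 * (L : ℝ≥0∞) := by
          refine mul_le_mul_right ?_ 2
          simp only [Nat.one_le_cast]; omega
    have hle : M + levSum l ≤ 2 * l.length := by omega
    have hbig : (1 : ℝ≥0∞) ≤ t ^ (2 * l.length) * (t⁻¹) ^ (M + levSum l) := by
      have hsplit : 2 * l.length = (2 * l.length - (M + levSum l)) + (M + levSum l) := by omega
      rw [hsplit, pow_add, mul_assoc, hcancel, mul_one]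
      exact one_le_pow_of_one_le' hone_le _
    calc ε ^ (l.length + 1) = ε ^ (l.length + 1) * 1 := (mul_one _).symm
    _ ≤ ε ^ (l.length + 1) * (t ^ (2 * l.length) * (t⁻¹) ^ (M + levSum l)) :=
        mul_le_mul_right hbig _
    _ = ε * t⁻¹ ^ M * ((t ^ 2 * ε) ^ l.length * t⁻¹ ^ levSum l) :=
        key_eq ε t l.length M (levSum l)
    _ = ε * t⁻¹ ^ M * ((4 * (L : ℝ≥0∞) ^ 2 * ε) ^ l.length * t⁻¹ ^ levSum l) := by
        rw [← ht4]
  · rw [if_neg h]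
    exact zero_le

/-- The measure of the bad set of mass `M+1`. -/
lemma meas_BadSet_le (μ : Measure Ω) [IsProbabilityMeasure μ]
    (ξ : ℕ → Ω → Bool) (L : ℕ) (hL3 : 3 ≤ L) (ε : ℝ≥0∞)
    (hlaw : ∀ i, μ {ω | ξ i ω = true} = ε)
    (hindep : iIndepFun ξ μ)
    (hs : ∑' e : ℕ × ℕ, W L ε e ≤ 2⁻¹) (M : ℕ) :
    μ (BadSet L ξ (M + 1)) ≤ (2 * (L : ℝ≥0∞) * ε) * (2⁻¹) ^ M := by
  set s := ∑' e : ℕ × ℕ, W L ε e with hs_def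
  set t := 2 * (L : ℝ≥0∞) with ht_def
  have hL0 : (L : ℝ≥0∞) ≠ 0 := by simp only [ne_eq, Nat.cast_eq_zero]; omega
  have hLtop : (L : ℝ≥0∞) ≠ ⊤ := ENNReal.natCast_ne_top L
  have hLinv : (L : ℝ≥0∞) * t⁻¹ = 2⁻¹ := by
    rw [ht_def, ENNReal.mul_inv (Or.inl two_ne_zero) (Or.inl ENNReal.ofNat_ne_top),
      mul_left_comm, ENNReal.mul_inv_cancel hL0 hLtop, mul_one]
  have h1 : μ (BadSet L ξ (M + 1)) ≤ ∑' j : ℕ × List (ℕ × ℕ),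
      (if validIdx L (M + 1) j then ε ^ (j.2.length + 1) else 0) := by
    refine (measure_iUnion_le _).trans (ENNReal.tsum_le_tsum ?_)
    intro j
    by_cases h : validIdx L (M + 1) j
    · rw [if_pos h]
      have heq : (⋃ (_ : validIdx L (M + 1) j), evt ξ j.1 j.2) = evt ξ j.1 j.2 := by
        simp [h]
      rw [heq, meas_evt μ ξ hindep ε hlaw j.1 j.2 (fun e he => (h.2.1 e he).1)]
    · rw [if_neg h]
      have heq : (⋃ (_ : validIdx L (M + 1) j), evt ξ j.1 j.2) = (∅ : Set Ω) := by
        simp [h]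
      rw [heq]
      simp
  have h2 : ∑' j : ℕ × List (ℕ × ℕ), (if validIdx L (M + 1) j then ε ^ (j.2.length + 1) else 0)
      ≤ (L : ℝ≥0∞) ^ (M + 1) * ((ε * (t⁻¹) ^ M) * (s ^ M * 2)) := by
    refine (ENNReal.tsum_le_tsum (key_le L hL3 ε M)).trans ?_
    rw [ENNReal.tsum_prod']
    have hfix : ∀ a : ℕ, (∑' l : List (ℕ × ℕ),
        (if a < L ^ (M + 1) then (1 : ℝ≥0∞) else 0)
          * ((ε * (t⁻¹) ^ M) * (if M ≤ l.length then prodW L ε l else 0)))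
        = (if a < L ^ (M + 1) then (1 : ℝ≥0∞) else 0)
          * ((ε * (t⁻¹) ^ M) * ∑' l : List (ℕ × ℕ), (if M ≤ l.length then prodW L ε l else 0)) := by
      intro a
      rw [← ENNReal.tsum_mul_left, ← ENNReal.tsum_mul_left]
    rw [tsum_congr hfix, ENNReal.tsum_mul_right]
    have hcount : ∑' a : ℕ, (if a < L ^ (M + 1) then (1 : ℝ≥0∞) else 0)
        = (L : ℝ≥0∞) ^ (M + 1) := by
      rw [tsum_eq_sum (s := Finset.range (L ^ (M + 1)))
        (fun a ha => if_neg (by simpa using ha))]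
      have : ∀ a ∈ Finset.range (L ^ (M + 1)), (if a < L ^ (M + 1) then (1 : ℝ≥0∞) else 0)
          = 1 := fun a ha => if_pos (Finset.mem_range.1 ha)
      rw [Finset.sum_congr rfl this, Finset.sum_const, Finset.card_range, nsmul_eq_mul,
        mul_one, Nat.cast_pow]
    rw [hcount]
    refine mul_le_mul_right (mul_le_mul_right ?_ _) _
    exact tsum_prodW_ge L ε M hs
  have h3 : (L : ℝ≥0∞) ^ (M + 1) * ((ε * (t⁻¹) ^ M) * (s ^ M * 2))
      ≤ (2 * (L : ℝ≥0∞) * ε) * (2⁻¹) ^ M := by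
    have heq : (L : ℝ≥0∞) ^ (M + 1) * ((ε * (t⁻¹) ^ M) * (s ^ M * 2))
        = (2 * (L : ℝ≥0∞) * ε) * ((L : ℝ≥0∞) * t⁻¹ * s) ^ M := by
      rw [pow_succ, mul_pow, mul_pow]
      ring
    rw [heq]
    refine mul_le_mul_right (pow_le_pow_left₀ zero_le ?_ M) _
    rw [hLinv]
    have hs1 : s ≤ 1 := hs.trans (ENNReal.inv_le_one.2 one_le_two)
    calc (2 : ℝ≥0∞)⁻¹ * s ≤ 2⁻¹ * 1 := mul_le_mul_right hs1 _
    _ = 2⁻¹ := mul_one _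
  exact h1.trans (h2.trans h3)

end Main

end ChiAux

open scoped ENNReal

open MeasureTheory ProbabilityTheory

/-- If `δ > 0` and `3 ≤ L < (64δ)^{-1/2}`, then `χ(Γ) < ∞` almost surely:
there is some `k` such that every cluster `C ∈ C_∞` with `m(C) > k` satisfies
`d(C, 0) ≥ L^{m(C)}`. -/
theorem chi_finite_as (δ : ℝ) (L : ℕ) (hδ : 0 < δ) (hL3 : 3 ≤ L)
    (hLδ : (L : ℝ) < (Real.sqrt (64 * δ))⁻¹)
    {Ω : Type} [MeasurableSpace Ω] (μ : Measure Ω) [IsProbabilityMeasure μ]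
    (ξ : ℕ → Ω → Bool) (hmeas : ∀ i, Measurable (ξ i))
    (hindep : iIndepFun ξ μ)
    (hlaw : ∀ i, μ {ω | ξ i ω = true} = ENNReal.ofReal δ) :
    ∀ᵐ ω ∂μ, ∀ H : ClusterHierarchy L {x | ξ x ω = true},
      ∃ k : ℕ, ∀ c ∈ H.Cinf, k < H.mass c → L ^ H.mass c ≤ clDist c {0} := by
  classical
  set ε := ENNReal.ofReal δ with hε_def
  -- the basic numerical inequality
  have hs0 : 0 < Real.sqrt (64 * δ) := Real.sqrt_pos.2 (by linarith)
  have hL1 : Real.sqrt (64 * δ) * L < 1 := by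
    have h := mul_lt_mul_of_pos_left hLδ hs0
    rwa [mul_inv_cancel₀ hs0.ne'] at h
  have h64 : 64 * δ * (L : ℝ) ^ 2 < 1 := by
    have hnn : 0 ≤ Real.sqrt (64 * δ) * L := by positivity
    have hpow := pow_lt_one₀ hnn hL1 (two_ne_zero)
    have hsq : Real.sqrt (64 * δ) ^ 2 = 64 * δ := Real.sq_sqrt (by linarith)
    calc 64 * δ * (L : ℝ) ^ 2 = (Real.sqrt (64 * δ) * L) ^ 2 := by
          rw [mul_pow, hsq]
    _ < 1 := hpow
  have hδL : 4 * (L : ℝ) ^ 2 * δ ≤ 1 / 2 := by nlinarith [sq_nonneg (L : ℝ)]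
  have hkey : 4 * (L : ℝ≥0∞) ^ 2 * ε ≤ 2⁻¹ := by
    have heq : 4 * (L : ℝ≥0∞) ^ 2 * ε = ENNReal.ofReal (4 * (L : ℝ) ^ 2 * δ) := by
      rw [ENNReal.ofReal_mul (by positivity), ENNReal.ofReal_mul (by norm_num : (0:ℝ) ≤ 4)]
      congr 1
      congr 1
      · norm_num
      · rw [ENNReal.ofReal_pow (by positivity), ENNReal.ofReal_natCast]
    rw [heq]
    calc ENNReal.ofReal (4 * (L : ℝ) ^ 2 * δ) ≤ ENNReal.ofReal (1 / 2) :=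
          ENNReal.ofReal_le_ofReal hδL
    _ = 2⁻¹ := by
        rw [one_div, ENNReal.ofReal_inv_of_pos (by norm_num : (0:ℝ) < 2)]
        norm_num
  have hW : ∑' e : ℕ × ℕ, ChiAux.W L ε e ≤ 2⁻¹ := by
    rw [ChiAux.tsum_W L ε hL3]
    exact hkey
  -- Borel--Cantelli
  have hsum : (∑' M : ℕ, μ (ChiAux.BadSet L ξ (M + 1))) ≠ ⊤ := by
    have hb : ∀ M : ℕ, μ (ChiAux.BadSet L ξ (M + 1))
        ≤ (2 * (L : ℝ≥0∞) * ε) * (2⁻¹) ^ M :=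
      ChiAux.meas_BadSet_le μ ξ L hL3 ε hlaw hindep hW
    have hle : (∑' M : ℕ, μ (ChiAux.BadSet L ξ (M + 1)))
        ≤ (2 * (L : ℝ≥0∞) * ε) * ∑' M : ℕ, ((2 : ℝ≥0∞)⁻¹) ^ M := by
      rw [← ENNReal.tsum_mul_left]
      exact ENNReal.tsum_le_tsum hb
    refine ne_top_of_le_ne_top ?_ hle
    rw [ENNReal.tsum_geometric, ENNReal.one_sub_inv_two, inv_inv]
    exact ENNReal.mul_ne_top
      (ENNReal.mul_ne_top
        (ENNReal.mul_ne_top ENNReal.ofNat_ne_top (ENNReal.natCast_ne_top L))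
        ENNReal.ofReal_ne_top)
      ENNReal.ofNat_ne_top
  have hBC : μ {ω | ∃ᶠ M in Filter.atTop, ω ∈ ChiAux.BadSet L ξ (M + 1)} = 0 :=
    MeasureTheory.measure_setOf_frequently_eq_zero (by simpa using hsum)
  have hae : ∀ᵐ ω ∂μ, ω ∉ {ω : Ω | ∃ᶠ M in Filter.atTop, ω ∈ ChiAux.BadSet L ξ (M + 1)} :=
    measure_eq_zero_iff_ae_notMem.mp hBC
  filter_upwards [hae] with ω hω
  intro H
  simp only [Set.mem_setOf_eq, Filter.not_frequently] at hω
  obtain ⟨N, hN⟩ := Filter.eventually_atTop.1 hω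
  refine ⟨N, ?_⟩
  intro c hc hmass
  obtain ⟨kk, hkk⟩ := hc.1
  obtain ⟨hne, hsub, hskel⟩ := ChiAux.cluster_good H kk c hkk
  by_contra hcon
  push_neg at hcon
  rw [ChiAux.clDist_singleton_zero hne] at hcon
  obtain ⟨l, hpts, hok, hend, hlen, hlev⟩ := hskel
  have hmem : ω ∈ ChiAux.BadSet L ξ (H.mass c) :=
    Set.mem_iUnion.2 ⟨(clAlpha c, l),
      Set.mem_iUnion.2 ⟨⟨hcon, hok, hlen, hlev⟩, fun x hx => hpts x hx⟩⟩
  have hM : H.mass c - 1 + 1 = H.mass c := by omega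
  exact hN (H.mass c - 1) (by omega) (by rw [hM]; exact hmem)
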